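/- Let p ≥ 2 be a real number, φ(t) := p·log(1 + t)·t^{p−1} for t ≥ 0, and Φ(t) := ∫₀ᵗ φ(τ) dτ. Then: (i) Φ(t) = log(1 + t)·t^p − ∫₀ᵗ τ^p/(1 + τ) dτ for all t ≥ 0; (ii) p·Φ(t) ≤ t·φ(t) for all t ≥ 0; (iii) lim_{t→∞} t·φ(t)/Φ(t) = p; (iv) lim_{t→0⁺} t·φ(t)/Φ(t) = p + 1. -/

import Mathlib

open Real Filter Set intervalIntegral Topology

noncomputable section

namespace St16

lemma contOn_f {p : ℝ} (hp : 2 ≤ p) {t : ℝ} :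
    ContinuousOn (fun τ : ℝ => τ ^ p / (1 + τ)) (Icc 0 t) := by
  apply ContinuousOn.div
  · exact (Real.continuous_rpow_const (by linarith)).continuousOn
  · fun_prop
  · intro x hx
    have := hx.1
    positivity

lemma contOn_log {t : ℝ} : ContinuousOn (fun τ : ℝ => Real.log (1 + τ)) (Icc 0 t) := by
  apply ContinuousOn.log
  · fun_prop
  · intro x hx
    have := hx.1
    positivity

/-- The integration-by-parts identity. -/
lemma key {p : ℝ} (hp : 2 ≤ p) {t : ℝ} (ht : 0 ≤ t) :
    ∫ τ in (0:ℝ)..t, p * Real.log (1 + τ) * τ ^ (p - 1)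
      = Real.log (1 + t) * t ^ p - ∫ τ in (0:ℝ)..t, τ ^ p / (1 + τ) := by
  have huIcc : uIcc (0:ℝ) t = Icc 0 t := uIcc_of_le ht
  have hderiv : ∀ τ ∈ uIcc (0:ℝ) t,
      HasDerivAt (fun x => Real.log (1 + x) * x ^ p)
        (τ ^ p / (1 + τ) + p * Real.log (1 + τ) * τ ^ (p - 1)) τ := by
    intro τ hτ
    rw [huIcc, mem_Icc] at hτ
    have h1 : (0:ℝ) < 1 + τ := by linarith [hτ.1]
    have hl : HasDerivAt (fun x : ℝ => Real.log (1 + x)) ((1 + τ)⁻¹) τ := by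
      have := (Real.hasDerivAt_log h1.ne').comp τ ((hasDerivAt_id τ).const_add 1)
      simpa [Function.comp_def] using this
    have hr : HasDerivAt (fun x : ℝ => x ^ p) (p * τ ^ (p - 1)) τ :=
      Real.hasDerivAt_rpow_const (Or.inr (by linarith))
    have := hl.mul hr
    refine this.congr_deriv ?_
    rw [div_eq_mul_inv]
    ring
  have hc1 : ContinuousOn (fun τ : ℝ => τ ^ p / (1 + τ)) (uIcc 0 t) := huIcc ▸ contOn_f hp
  have hc2 : ContinuousOn (fun τ : ℝ => p * Real.log (1 + τ) * τ ^ (p - 1)) (uIcc 0 t) := by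
    rw [huIcc]
    exact (continuousOn_const.mul contOn_log).mul
      (Real.continuous_rpow_const (by linarith)).continuousOn
  have hFTC := intervalIntegral.integral_eq_sub_of_hasDerivAt hderiv
    ((hc1.add hc2).intervalIntegrable)
  rw [intervalIntegral.integral_add hc1.intervalIntegrable hc2.intervalIntegrable] at hFTC
  simp only [add_zero, Real.log_one, zero_mul] at hFTC
  linarith [hFTC]

lemma R_nonneg {p : ℝ} (hp : 2 ≤ p) {t : ℝ} (ht : 0 ≤ t) :
    0 ≤ ∫ τ in (0:ℝ)..t, τ ^ p / (1 + τ) := by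
  apply intervalIntegral.integral_nonneg ht
  intro x hx
  have := hx.1
  positivity

lemma rpow_succ {t : ℝ} (ht : 0 < t) (q : ℝ) : t ^ (q + 1) = t ^ q * t := by
  rw [Real.rpow_add ht, Real.rpow_one]

/-- upper bound by `t^p / p`. -/
lemma R_le_one {p : ℝ} (hp : 2 ≤ p) {t : ℝ} (ht : 0 ≤ t) :
    ∫ τ in (0:ℝ)..t, τ ^ p / (1 + τ) ≤ t ^ p / p := by
  have h1 : ∫ τ in (0:ℝ)..t, τ ^ p / (1 + τ) ≤ ∫ τ in (0:ℝ)..t, τ ^ (p - 1) := by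
    apply intervalIntegral.integral_mono_on ht
      ((uIcc_of_le ht ▸ contOn_f hp).intervalIntegrable)
      (((Real.continuous_rpow_const (by linarith : (0:ℝ) ≤ p - 1)).continuousOn).intervalIntegrable)
    intro x hx
    have hx0 : 0 ≤ x := hx.1
    have h1x : (0:ℝ) < 1 + x := by linarith
    rcases eq_or_lt_of_le hx0 with h | h
    · rw [← h, Real.zero_rpow (by linarith : p ≠ 0), Real.zero_rpow (by linarith : p - 1 ≠ 0)]
      simp
    · have hxp : x ^ p = x ^ (p - 1) * x := by
        have := rpow_succ h (p - 1); simpa using this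
      rw [hxp, mul_div_assoc]
      have hxd : x / (1 + x) ≤ 1 := by
        rw [div_le_one h1x]; linarith
      calc x ^ (p - 1) * (x / (1 + x)) ≤ x ^ (p - 1) * 1 := by
            apply mul_le_mul_of_nonneg_left hxd (by positivity)
        _ = x ^ (p - 1) := mul_one _
  have h2 : ∫ τ in (0:ℝ)..t, τ ^ (p - 1) = t ^ p / p := by
    rw [integral_rpow (Or.inl (by linarith))]
    rw [Real.zero_rpow (by linarith : p - 1 + 1 ≠ 0)]
    rw [sub_add_cancel]
    ring
  linarith

/-- upper bound by `t^(p+1)/(p+1)`. -/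
lemma R_le_two {p : ℝ} (hp : 2 ≤ p) {t : ℝ} (ht : 0 ≤ t) :
    ∫ τ in (0:ℝ)..t, τ ^ p / (1 + τ) ≤ t ^ (p + 1) / (p + 1) := by
  have h1 : ∫ τ in (0:ℝ)..t, τ ^ p / (1 + τ) ≤ ∫ τ in (0:ℝ)..t, τ ^ p := by
    apply intervalIntegral.integral_mono_on ht
      ((uIcc_of_le ht ▸ contOn_f hp).intervalIntegrable)
      (((Real.continuous_rpow_const (by linarith : (0:ℝ) ≤ p)).continuousOn).intervalIntegrable)
    intro x hx
    have hx0 : 0 ≤ x := hx.1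
    have h1x : (1:ℝ) ≤ 1 + x := by linarith
    calc x ^ p / (1 + x) ≤ x ^ p / 1 := by gcongr <;> positivity
      _ = x ^ p := div_one _
  have h2 : ∫ τ in (0:ℝ)..t, τ ^ p = t ^ (p + 1) / (p + 1) := by
    rw [integral_rpow (Or.inl (by linarith))]
    rw [Real.zero_rpow (by linarith : p + 1 ≠ 0)]
    ring
  linarith

/-- lower bound. -/
lemma R_ge {p : ℝ} (hp : 2 ≤ p) {t : ℝ} (ht : 0 ≤ t) :
    t ^ (p + 1) / ((p + 1) * (1 + t)) ≤ ∫ τ in (0:ℝ)..t, τ ^ p / (1 + τ) := by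
  have h1 : ∫ τ in (0:ℝ)..t, τ ^ p / (1 + t) ≤ ∫ τ in (0:ℝ)..t, τ ^ p / (1 + τ) := by
    apply intervalIntegral.integral_mono_on ht
      ((((Real.continuous_rpow_const (by linarith : (0:ℝ) ≤ p)).continuousOn).div_const
        _).intervalIntegrable)
      ((uIcc_of_le ht ▸ contOn_f hp).intervalIntegrable)
    intro x hx
    have hx0 : 0 ≤ x := hx.1
    have hxt : x ≤ t := hx.2
    gcongr
  have h2 : ∫ τ in (0:ℝ)..t, τ ^ p / (1 + t) = t ^ (p + 1) / ((p + 1) * (1 + t)) := by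
    rw [intervalIntegral.integral_div, integral_rpow (Or.inl (by linarith)),
      Real.zero_rpow (by linarith : p + 1 ≠ 0), sub_zero, div_div]
  linarith

/-- log bounds. -/
lemma log_le {t : ℝ} (ht : 0 ≤ t) : Real.log (1 + t) ≤ t := by
  have := Real.log_le_sub_one_of_pos (show (0:ℝ) < 1 + t by linarith)
  linarith

lemma log_ge {t : ℝ} (ht : 0 ≤ t) : t / (1 + t) ≤ Real.log (1 + t) := by
  have h1 : (0:ℝ) < 1 + t := by linarith
  have h2 : (0:ℝ) < (1 + t)⁻¹ := by positivity
  have := Real.log_le_sub_one_of_pos h2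
  rw [Real.log_inv] at this
  have : 1 - (1 + t)⁻¹ ≤ Real.log (1 + t) := by linarith
  calc t / (1 + t) = 1 - (1 + t)⁻¹ := by field_simp; ring
    _ ≤ Real.log (1 + t) := this

end St16

/-- properties of `φ(t) = p log(1+t) t^{p−1}` and its primitive `Φ`. -/
theorem statement16 (p : ℝ) (hp : 2 ≤ p)
    (φ : ℝ → ℝ) (hφ : ∀ t ≥ (0:ℝ), φ t = p * Real.log (1 + t) * t ^ (p - 1))
    (Φ : ℝ → ℝ) (hΦ : ∀ t : ℝ, Φ t = ∫ τ in (0:ℝ)..t, φ τ) :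
    (∀ t ≥ (0:ℝ), Φ t = Real.log (1 + t) * t ^ p - ∫ τ in (0:ℝ)..t, τ ^ p / (1 + τ)) ∧
    (∀ t ≥ (0:ℝ), p * Φ t ≤ t * φ t) ∧
    Tendsto (fun t => t * φ t / Φ t) atTop (nhds p) ∧
    Tendsto (fun t => t * φ t / Φ t) (nhdsWithin 0 (Set.Ioi 0)) (nhds (p + 1)) := by
  have hp0 : (0:ℝ) < p := by linarith
  -- part (i)
  have hiden : ∀ t ≥ (0:ℝ), Φ t = Real.log (1 + t) * t ^ p
      - ∫ τ in (0:ℝ)..t, τ ^ p / (1 + τ) := by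
    intro t ht
    have he : Set.EqOn φ (fun τ => p * Real.log (1 + τ) * τ ^ (p - 1)) (uIcc 0 t) := by
      intro x hx
      rw [uIcc_of_le ht] at hx
      exact hφ x hx.1
    rw [hΦ t, intervalIntegral.integral_congr he, St16.key hp ht]
  -- numerator formula
  have hNform : ∀ t > (0:ℝ), t * φ t = p * Real.log (1 + t) * t ^ p := by
    intro t ht
    rw [hφ t ht.le, show t ^ p = t ^ (p - 1) * t from by
      simpa using St16.rpow_succ ht (p - 1)]
    ring
  refine ⟨hiden, ?_, ?_, ?_⟩
  · -- part (ii)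
    intro t ht
    rcases eq_or_lt_of_le ht with h | h
    · rw [← h, hΦ 0]
      simp
    · rw [hiden t ht, hNform t h]
      have hR := St16.R_nonneg hp ht
      nlinarith [mul_nonneg hp0.le hR]
  · -- part (iii)
    have hL : Tendsto (fun t : ℝ => Real.log (1 + t)) atTop atTop :=
      Real.tendsto_log_atTop.comp (tendsto_atTop_add_const_left atTop 1 tendsto_id)
    have hL' : Tendsto (fun t : ℝ => Real.log (1 + t) - 1 / p) atTop atTop := by
      simpa [sub_eq_add_neg] using tendsto_atTop_add_const_right atTop (-(1 / p)) hL
    have hu : Tendsto (fun t : ℝ => p + 1 / (Real.log (1 + t) - 1 / p)) atTop (𝓝 (p + 0)) := by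
      refine tendsto_const_nhds.add ?_
      exact hL'.inv_tendsto_atTop.congr (fun t => by simp [one_div])
    rw [add_zero] at hu
    apply tendsto_of_tendsto_of_tendsto_of_le_of_le' (g := fun _ => p) tendsto_const_nhds hu
    · -- lower bound eventually
      filter_upwards [hL.eventually_ge_atTop 1, eventually_ge_atTop (1:ℝ)] with t hL1 ht1
      have ht0 : (0:ℝ) < t := by linarith
      have htp : (0:ℝ) < t ^ p := Real.rpow_pos_of_pos ht0 p
      have hR0 := St16.R_nonneg hp ht0.le
      have hR1 := St16.R_le_one hp ht0.le
      set L := Real.log (1 + t) with hLdef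
      set R := ∫ τ in (0:ℝ)..t, τ ^ p / (1 + τ) with hRdef
      have hΦt : Φ t = L * t ^ p - R := hiden t ht0.le
      have h1p : 1 / p < 1 := by
        rw [div_lt_one hp0]; linarith
      have hexp : (L - 1 / p) * t ^ p = L * t ^ p - t ^ p / p := by ring
      have hDlow : (L - 1 / p) * t ^ p ≤ Φ t := by rw [hΦt]; linarith
      have hDlowpos : 0 < (L - 1 / p) * t ^ p := by
        apply mul_pos (by linarith) htp
      have hΦpos : 0 < Φ t := lt_of_lt_of_le hDlowpos hDlow
      have hDup : Φ t ≤ L * t ^ p := by rw [hΦt]; linarith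
      have hN : t * φ t = p * L * t ^ p := hNform t ht0
      have hNpos : 0 < p * L * t ^ p := by
        apply mul_pos (mul_pos hp0 (by linarith)) htp
      have key : p * L * t ^ p / (L * t ^ p) ≤ t * φ t / Φ t := by
        rw [hN]
        gcongr
      calc p = p * L * t ^ p / (L * t ^ p) := by
            rw [mul_assoc, mul_div_assoc, div_self (by positivity), mul_one]
        _ ≤ t * φ t / Φ t := key
    · -- upper bound eventually
      filter_upwards [hL.eventually_ge_atTop 1, eventually_ge_atTop (1:ℝ)] with t hL1 ht1
      have ht0 : (0:ℝ) < t := by linarith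
      have htp : (0:ℝ) < t ^ p := Real.rpow_pos_of_pos ht0 p
      have hR0 := St16.R_nonneg hp ht0.le
      have hR1 := St16.R_le_one hp ht0.le
      set L := Real.log (1 + t) with hLdef
      set R := ∫ τ in (0:ℝ)..t, τ ^ p / (1 + τ) with hRdef
      have hΦt : Φ t = L * t ^ p - R := hiden t ht0.le
      have h1p : 1 / p < 1 := by
        rw [div_lt_one hp0]; linarith
      have hexp : (L - 1 / p) * t ^ p = L * t ^ p - t ^ p / p := by ring
      have hDlow : (L - 1 / p) * t ^ p ≤ Φ t := by rw [hΦt]; linarith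
      have hDlowpos : 0 < (L - 1 / p) * t ^ p := by
        apply mul_pos (by linarith) htp
      have hΦpos : 0 < Φ t := lt_of_lt_of_le hDlowpos hDlow
      have hN : t * φ t = p * L * t ^ p := hNform t ht0
      have hNpos : 0 < p * L * t ^ p := by
        apply mul_pos (mul_pos hp0 (by linarith)) htp
      have key : t * φ t / Φ t ≤ p * L * t ^ p / ((L - 1 / p) * t ^ p) := by
        rw [hN]
        gcongr
      have heq : p * L * t ^ p / ((L - 1 / p) * t ^ p) = p + 1 / (L - 1 / p) := by
        have h1 : (0:ℝ) < L - 1 / p := by linarith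
        have h2 : p * L * t ^ p / ((L - 1 / p) * t ^ p) = p * L / (L - 1 / p) :=
          mul_div_mul_right _ _ htp.ne'
        have h3 : p * L = p * (L - 1 / p) + 1 := by field_simp; ring
        rw [h2, h3, add_div, mul_div_assoc, div_self h1.ne', mul_one]
      rw [heq] at key
      exact key
  · -- part (iv)
    have h1t : Tendsto (fun t : ℝ => 1 + t) (𝓝[>] (0:ℝ)) (𝓝 1) := by
      have h : Tendsto (fun t : ℝ => 1 + t) (𝓝 (0:ℝ)) (𝓝 (1 + 0)) :=
        ((continuous_const.add continuous_id).tendsto (0:ℝ))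
      rw [add_zero] at h
      exact h.mono_left nhdsWithin_le_nhds
    have hp1 : (0:ℝ) < p + 1 := by linarith
    -- lower bound function
    have hld : Tendsto (fun t : ℝ => (1 + t) * (1 - 1 / ((p + 1) * (1 + t)))) (𝓝[>] (0:ℝ))
        (𝓝 ((1:ℝ) * (1 - 1 / ((p + 1) * 1)))) := by
      apply h1t.mul
      apply tendsto_const_nhds.sub
      exact tendsto_const_nhds.div (tendsto_const_nhds.mul h1t) (by positivity)
    have hldval : (1:ℝ) * (1 - 1 / ((p + 1) * 1)) = p / (p + 1) := by
      field_simp; ring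
    have hℓ : Tendsto (fun t : ℝ => p / ((1 + t) * (1 - 1 / ((p + 1) * (1 + t)))))
        (𝓝[>] (0:ℝ)) (𝓝 (p + 1)) := by
      have h : Tendsto (fun t : ℝ => p / ((1 + t) * (1 - 1 / ((p + 1) * (1 + t)))))
          (𝓝[>] (0:ℝ)) (𝓝 (p / ((1:ℝ) * (1 - 1 / ((p + 1) * 1))))) :=
        tendsto_const_nhds.div hld (by rw [hldval]; positivity)
      have hveq : p / ((1:ℝ) * (1 - 1 / ((p + 1) * 1))) = p + 1 := by
        rw [hldval, div_div_eq_mul_div, mul_comm, mul_div_assoc, div_self hp0.ne', mul_one]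
      rwa [hveq] at h
    have hud : Tendsto (fun t : ℝ => 1 / (1 + t) - 1 / (p + 1)) (𝓝[>] (0:ℝ))
        (𝓝 (1 / (1:ℝ) - 1 / (p + 1))) :=
      (tendsto_const_nhds.div h1t one_ne_zero).sub tendsto_const_nhds
    have hu : Tendsto (fun t : ℝ => p / (1 / (1 + t) - 1 / (p + 1)))
        (𝓝[>] (0:ℝ)) (𝓝 (p + 1)) := by
      have hne : 1 / (1:ℝ) - 1 / (p + 1) ≠ 0 := by
        rw [one_div_one]
        have : 1 / (p + 1) < 1 := by rw [div_lt_one hp1]; linarith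
        linarith
      have h : Tendsto (fun t : ℝ => p / (1 / (1 + t) - 1 / (p + 1)))
          (𝓝[>] (0:ℝ)) (𝓝 (p / (1 / (1:ℝ) - 1 / (p + 1)))) :=
        tendsto_const_nhds.div hud hne
      have hveq : p / (1 / (1:ℝ) - 1 / (p + 1)) = p + 1 := by
        rw [one_div_one, show (1:ℝ) - 1 / (p + 1) = p / (p + 1) from by field_simp; ring,
          div_div_eq_mul_div, mul_comm, mul_div_assoc, div_self hp0.ne', mul_one]
      rwa [hveq] at h
    apply tendsto_of_tendsto_of_tendsto_of_le_of_le' hℓ hu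
    · -- lower bound eventually
      filter_upwards [Ioo_mem_nhdsGT_of_mem (show (0:ℝ) ∈ Ico (0:ℝ) 1 by norm_num)] with t ht
      obtain ⟨ht0, ht1⟩ := ht
      have h1tp : (0:ℝ) < 1 + t := by linarith
      have htp : (0:ℝ) < t ^ p := Real.rpow_pos_of_pos ht0 p
      have htp1 : t ^ (p + 1) = t ^ p * t := St16.rpow_succ ht0 p
      have htp1pos : (0:ℝ) < t ^ (p + 1) := Real.rpow_pos_of_pos ht0 _
      have hRl := St16.R_ge hp ht0.le
      have hRu := St16.R_le_two hp ht0.le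
      have hLl := St16.log_ge ht0.le
      have hLu := St16.log_le ht0.le
      set L := Real.log (1 + t) with hLdef
      set R := ∫ τ in (0:ℝ)..t, τ ^ p / (1 + τ) with hRdef
      have hΦt : Φ t = L * t ^ p - R := hiden t ht0.le
      have hN : t * φ t = p * L * t ^ p := hNform t ht0
      -- bounds on numerator and denominator
      have e1 : (t / (1 + t)) * t ^ p = t ^ (p + 1) / (1 + t) := by rw [htp1]; ring
      have e2 : t ^ (p + 1) * (1 / (1 + t) - 1 / (p + 1))
          = t ^ (p + 1) / (1 + t) - t ^ (p + 1) / (p + 1) := by ring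
      have e3 : t ^ (p + 1) * (1 - 1 / ((p + 1) * (1 + t)))
          = t ^ (p + 1) - t ^ (p + 1) / ((p + 1) * (1 + t)) := by ring
      have hmulL : (t / (1 + t)) * t ^ p ≤ L * t ^ p :=
        mul_le_mul_of_nonneg_right hLl htp.le
      have hmulU : L * t ^ p ≤ t * t ^ p := mul_le_mul_of_nonneg_right hLu htp.le
      have ht_tp : t * t ^ p = t ^ (p + 1) := by rw [htp1]; ring
      have hDlow : t ^ (p + 1) * (1 / (1 + t) - 1 / (p + 1)) ≤ Φ t := by
        rw [hΦt]; rw [e1] at hmulL; linarith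
      have hDup : Φ t ≤ t ^ (p + 1) * (1 - 1 / ((p + 1) * (1 + t))) := by
        rw [hΦt]; rw [ht_tp] at hmulU; linarith
      have hfrac : 1 / (p + 1) < 1 / (1 + t) :=
        one_div_lt_one_div_of_lt h1tp (by linarith)
      have hDlowpos : 0 < t ^ (p + 1) * (1 / (1 + t) - 1 / (p + 1)) := by
        apply mul_pos htp1pos (by linarith)
      have hΦpos : 0 < Φ t := lt_of_lt_of_le hDlowpos hDlow
      have hNlow : p * t ^ (p + 1) / (1 + t) ≤ t * φ t := by
        rw [hN]
        calc p * t ^ (p + 1) / (1 + t) = p * ((t / (1 + t)) * t ^ p) := by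
              rw [e1]; ring
          _ ≤ p * (L * t ^ p) := by
              apply mul_le_mul_of_nonneg_left hmulL hp0.le
          _ = p * L * t ^ p := by ring
      have hNpos : 0 < t * φ t := by
        calc (0:ℝ) < p * t ^ (p + 1) / (1 + t) := by positivity
          _ ≤ t * φ t := hNlow
      have hDuppos : 0 < t ^ (p + 1) * (1 - 1 / ((p + 1) * (1 + t))) :=
        lt_of_lt_of_le hΦpos hDup
      have hstep : p * t ^ (p + 1) / (1 + t) / (t ^ (p + 1) * (1 - 1 / ((p + 1) * (1 + t))))
          ≤ t * φ t / Φ t :=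
        div_le_div₀ hNpos.le hNlow hΦpos hDup
      have heq : p * t ^ (p + 1) / (1 + t) / (t ^ (p + 1) * (1 - 1 / ((p + 1) * (1 + t))))
          = p / ((1 + t) * (1 - 1 / ((p + 1) * (1 + t)))) := by
        have hX : (0:ℝ) < 1 - 1 / ((p + 1) * (1 + t)) := by
          have : 1 / ((p + 1) * (1 + t)) < 1 := by
            rw [div_lt_one (by positivity)]
            nlinarith
          linarith
        rw [div_div, div_eq_div_iff (by positivity) (by positivity)]
        ring
      rw [heq] at hstep
      exact hstep
    · -- upper bound eventually
      filter_upwards [Ioo_mem_nhdsGT_of_mem (show (0:ℝ) ∈ Ico (0:ℝ) 1 by norm_num)] with t ht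
      obtain ⟨ht0, ht1⟩ := ht
      have h1tp : (0:ℝ) < 1 + t := by linarith
      have htp : (0:ℝ) < t ^ p := Real.rpow_pos_of_pos ht0 p
      have htp1 : t ^ (p + 1) = t ^ p * t := St16.rpow_succ ht0 p
      have htp1pos : (0:ℝ) < t ^ (p + 1) := Real.rpow_pos_of_pos ht0 _
      have hRl := St16.R_ge hp ht0.le
      have hRu := St16.R_le_two hp ht0.le
      have hLl := St16.log_ge ht0.le
      have hLu := St16.log_le ht0.le
      set L := Real.log (1 + t) with hLdef
      set R := ∫ τ in (0:ℝ)..t, τ ^ p / (1 + τ) with hRdef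
      have hΦt : Φ t = L * t ^ p - R := hiden t ht0.le
      have hN : t * φ t = p * L * t ^ p := hNform t ht0
      have e1 : (t / (1 + t)) * t ^ p = t ^ (p + 1) / (1 + t) := by rw [htp1]; ring
      have e2 : t ^ (p + 1) * (1 / (1 + t) - 1 / (p + 1))
          = t ^ (p + 1) / (1 + t) - t ^ (p + 1) / (p + 1) := by ring
      have hmulL : (t / (1 + t)) * t ^ p ≤ L * t ^ p :=
        mul_le_mul_of_nonneg_right hLl htp.le
      have hmulU : L * t ^ p ≤ t * t ^ p := mul_le_mul_of_nonneg_right hLu htp.le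
      have ht_tp : t * t ^ p = t ^ (p + 1) := by rw [htp1]; ring
      have hDlow : t ^ (p + 1) * (1 / (1 + t) - 1 / (p + 1)) ≤ Φ t := by
        rw [hΦt]; rw [e1] at hmulL; linarith
      have hfrac : 1 / (p + 1) < 1 / (1 + t) :=
        one_div_lt_one_div_of_lt h1tp (by linarith)
      have hDlowpos : 0 < t ^ (p + 1) * (1 / (1 + t) - 1 / (p + 1)) := by
        apply mul_pos htp1pos (by linarith)
      have hΦpos : 0 < Φ t := lt_of_lt_of_le hDlowpos hDlow
      have hNup : t * φ t ≤ p * t ^ (p + 1) := by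
        rw [hN]
        calc p * L * t ^ p = p * (L * t ^ p) := by ring
          _ ≤ p * (t * t ^ p) := mul_le_mul_of_nonneg_left hmulU hp0.le
          _ = p * t ^ (p + 1) := by rw [ht_tp]
      have hstep : t * φ t / Φ t
          ≤ p * t ^ (p + 1) / (t ^ (p + 1) * (1 / (1 + t) - 1 / (p + 1))) :=
        div_le_div₀ (by positivity) hNup hDlowpos hDlow
      have heq : p * t ^ (p + 1) / (t ^ (p + 1) * (1 / (1 + t) - 1 / (p + 1)))
          = p / (1 / (1 + t) - 1 / (p + 1)) := by
        rw [div_eq_div_iff (by positivity) (by linarith)]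
        ring
      rw [heq] at hstep
      exact hstep
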